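/- arXiv:2111.13144 — 3 statements merged into one kernel-verified Lean document; each statement's English description precedes it below -/
import Mathlib

section
/- Let ε_child > 0, ε_eval > 0 and y* ∈ (0,1]. Let s : ℕ → ℝ, c : ℕ → ℝ and L : ℕ → ℝ satisfy: s 0 ≤ 1; for all n, s (n+1) ≤ s n − ε_child; for all n, 0 ≤ c n and c n ≤ (1 − s n)/ε_eval; L 0 = 1 + c 0; and for all n, L (n+1) = 1 + c (n+1) + L n. Then for every n with s n ≥ y*, one has n ≤ (1 − y*)/ε_child and L n ≤ ((1 − y*)/ε_child + 1) · (1 + (1 − y*)/ε_eval). -/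
theorem informed_level_bound
    (ε_child ε_eval : ℝ) (hεc : 0 < ε_child) (hεe : 0 < ε_eval)
    (ystar : ℝ) (hy : ystar ∈ Set.Ioc (0 : ℝ) 1)
    (s c L : ℕ → ℝ)
    (hs0 : s 0 ≤ 1)
    (hs : ∀ n, s (n + 1) ≤ s n - ε_child)
    (hc_nonneg : ∀ n, 0 ≤ c n)
    (hc : ∀ n, c n ≤ (1 - s n) / ε_eval)
    (hL0 : L 0 = 1 + c 0)
    (hL : ∀ n, L (n + 1) = 1 + c (n + 1) + L n) :
    ∀ n, s n ≥ ystar →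
      (n : ℝ) ≤ (1 - ystar) / ε_child ∧
      L n ≤ ((1 - ystar) / ε_child + 1) * (1 + (1 - ystar) / ε_eval) := by
  obtain ⟨hy0, hy1⟩ := hy
  have hBnn : 0 ≤ 1 + (1 - ystar) / ε_eval := by
    have : 0 ≤ (1 - ystar) / ε_eval := div_nonneg (by linarith) hεe.le
    linarith
  have key : ∀ n, s n ≤ s 0 - n * ε_child := by
    intro n
    induction n with
    | zero => simp
    | succ k ih =>
      have := hs k
      push_cast
      linarith
  have hLbound : ∀ n, s n ≥ ystar →
      L n ≤ (n + 1 : ℝ) * (1 + (1 - ystar) / ε_eval) := by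
    intro n
    induction n with
    | zero =>
      intro hsn
      have hcb : c 0 ≤ (1 - ystar) / ε_eval := by
        calc c 0 ≤ (1 - s 0) / ε_eval := hc 0
          _ ≤ (1 - ystar) / ε_eval := by gcongr <;> linarith
      rw [hL0]; push_cast; linarith
    | succ k ih =>
      intro hsn
      have hsk : s k ≥ ystar := by have := hs k; linarith
      have ihk := ih hsk
      have hcb : c (k + 1) ≤ (1 - ystar) / ε_eval := by
        calc c (k + 1) ≤ (1 - s (k + 1)) / ε_eval := hc (k + 1)
          _ ≤ (1 - ystar) / ε_eval := by gcongr <;> linarith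
      rw [hL k]
      push_cast
      linarith
  intro n hsn
  have hn : (n : ℝ) ≤ (1 - ystar) / ε_child := by
    have := key n
    rw [le_div_iff₀ hεc]
    nlinarith
  refine ⟨hn, ?_⟩
  calc L n ≤ (n + 1 : ℝ) * (1 + (1 - ystar) / ε_eval) := hLbound n hsn
    _ ≤ ((1 - ystar) / ε_child + 1) * (1 + (1 - ystar) / ε_eval) := by nlinarith
end

section
/- Let ε_child > 0 and ε_eval > 0, and let f : ℝ → ℝ satisfy f y ≤ 0 for all y > 1, and f y ≤ 1 + (1 − y)/ε_eval + f (y + ε_child) for all y ≤ 1. Then for every y* ∈ (0,1], f y* ≤ (⌊(1 − y*)/ε_child⌋ + 1) · (1 + (1 − y*)/ε_eval). -/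
theorem level_recursion_closed_form
    (ε_child ε_eval : ℝ) (hεc : 0 < ε_child) (hεe : 0 < ε_eval)
    (f : ℝ → ℝ)
    (h_base : ∀ y : ℝ, 1 < y → f y ≤ 0)
    (h_rec : ∀ y : ℝ, y ≤ 1 → f y ≤ 1 + (1 - y) / ε_eval + f (y + ε_child)) :
    ∀ ystar : ℝ, ystar ∈ Set.Ioc (0 : ℝ) 1 →
      f ystar ≤ ((⌊(1 - ystar) / ε_child⌋ : ℝ) + 1) * (1 + (1 - ystar) / ε_eval) := by
  have key : ∀ n : ℕ, ∀ y : ℝ, y ≤ 1 → ⌊(1 - y) / ε_child⌋ = (n : ℤ) →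
      f y ≤ ((n : ℝ) + 1) * (1 + (1 - y) / ε_eval) := by
    intro n
    induction n with
    | zero =>
      intro y hy hfl
      have hy1 : 0 ≤ (1 - y) / ε_eval := div_nonneg (by linarith) hεe.le
      have hlt : (1 - y) / ε_child < 1 := by
        have := Int.lt_floor_add_one ((1 - y) / ε_child)
        rw [hfl] at this; simpa using this
      have hlt' : 1 - y < ε_child := by
        have := (div_lt_one hεc).mp hlt; linarith
      have hbig : 1 < y + ε_child := by linarith
      have := h_rec y hy
      have := h_base _ hbig
      push_cast
      nlinarith
    | succ m ih =>
      intro y hy hfl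
      have hy1 : 0 ≤ (1 - y) / ε_eval := div_nonneg (by linarith) hεe.le
      have hrec := h_rec y hy
      by_cases hc : 1 < y + ε_child
      · have hb := h_base _ hc
        have hm : (0:ℝ) ≤ (m:ℝ) + 1 := by positivity
        nlinarith
      · push_neg at hc
        have heq : (1 - (y + ε_child)) / ε_child = (1 - y) / ε_child - 1 := by
          field_simp; ring
        have hfl' : ⌊(1 - (y + ε_child)) / ε_child⌋ = (m : ℤ) := by
          rw [heq, Int.floor_sub_one, hfl]; push_cast; ring
        have hih := ih (y + ε_child) hc hfl'
        have hmono : 1 + (1 - (y + ε_child)) / ε_eval ≤ 1 + (1 - y) / ε_eval := by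
          gcongr
          linarith
        have hm : (0:ℝ) ≤ (m:ℝ) + 1 := by positivity
        push_cast at hih ⊢
        nlinarith
  intro ystar hy
  obtain ⟨hy0, hy1⟩ := hy
  have hnn : 0 ≤ (1 - ystar) / ε_child := div_nonneg (by linarith) hεc.le
  have hfl0 : 0 ≤ ⌊(1 - ystar) / ε_child⌋ := Int.floor_nonneg.mpr hnn
  obtain ⟨n, hn⟩ := Int.eq_ofNat_of_zero_le hfl0
  have := key n ystar hy1 hn
  rw [hn]; push_cast at this ⊢; exact this
end

section
/- Let X be a type, σ : X → ℝ a score function, y* ∈ ℝ, and suppose the set G = {x : X | σ x ≥ y*} is finite with cardinality N. Let F ⊆ G, and let p : ℕ → X be an injective sequence such that for every n : ℕ, if there exists x ∈ F with x ∉ p '' (Set.Iio n), then σ (p n) ≥ y*. Then F ⊆ p '' (Set.Iio N). -/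
theorem best_first_exhaustion
    {X : Type*} (σ : X → ℝ) (ystar : ℝ)
    (G : Set X) (hG : G = {x : X | σ x ≥ ystar})
    (hGfin : G.Finite) (N : ℕ) (hN : G.ncard = N)
    (F : Set X) (hF : F ⊆ G)
    (p : ℕ → X) (hp : Function.Injective p)
    (hpop : ∀ n : ℕ, (∃ x ∈ F, x ∉ p '' Set.Iio n) → σ (p n) ≥ ystar) :
    F ⊆ p '' Set.Iio N := by
  intro x hx
  by_contra hnot
  have hsub : p '' Set.Iic N ⊆ G := by
    rintro _ ⟨n, hn, rfl⟩
    rw [hG]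
    refine hpop n ⟨x, hx, fun ⟨m, hm, he⟩ => hnot ⟨m, Set.mem_Iio.mpr (lt_of_lt_of_le hm hn), he⟩⟩
  have h1 : (p '' Set.Iic N).ncard = N + 1 := by
    rw [Set.ncard_image_of_injective _ hp, ← Finset.coe_Iic, Set.ncard_coe_finset,
      Nat.card_Iic]
  have h2 : (p '' Set.Iic N).ncard ≤ G.ncard := Set.ncard_le_ncard hsub hGfin
  omega
end
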